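/- Exit law from the labyrinth: let P be stochastic on I ⊔ E with (H1): P(e,i) = π(i) for all e ∈ E, i ∈ I, and (H2): π(E) π_Eᵗ = π_Eᵗ P_{E×E}, where π is a stationary distribution with 0 < π(I) < 1. Let X start from π̂_E = π(E)^{-1} π_E and τ_I = inf{n > 0 : X_n ∈ I}. Then for all i ∈ I and n ≥ 1: P_{π̂_E}(X_{τ_I} = i, τ_I = n) = π̂_I(i) · π(E)^{n−1} π(I), where π̂_I(i) = π(i)/π(I). In particular τ_I ∼ Geometric(π(I)), X_{τ_I} ∼ π̂_I, and X_{τ_I} is independent of τ_I. -/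

import Mathlib

open Finset

lemma aux_path_sum {E : Type*} [Fintype E] (Q : E → E → ℝ) (μ : E → ℝ) (c : ℝ)
    (hH2 : ∀ e, ∑ d, μ d * Q d e = c * μ e) :
    ∀ (n : ℕ) (g : E → ℝ),
      ∑ z : Fin (n + 1) → E,
        μ (z 0) * (∏ k : Fin n, Q (z k.castSucc) (z k.succ)) * g (z (Fin.last n))
      = c ^ n * ∑ e, μ e * g e := by
  intro n
  induction n with
  | zero =>
    intro g
    rw [← (Equiv.funUnique (Fin 1) E).symm.sum_comp]
    simp [mul_assoc]
  | succ n ih =>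
    intro g
    rw [← (Fin.consEquiv (fun _ : Fin (n + 2) => E)).sum_comp, Fintype.sum_prod_type]
    have key : ∀ (e0 : E) (z : Fin (n + 1) → E),
        (fun w : Fin (n + 2) → E =>
          μ (w 0) * (∏ k : Fin (n + 1), Q (w k.castSucc) (w k.succ)) * g (w (Fin.last (n + 1))))
          ((Fin.consEquiv (fun _ : Fin (n + 2) => E)) (e0, z))
        = μ e0 * Q e0 (z 0) *
            ((∏ k : Fin n, Q (z k.castSucc) (z k.succ)) * g (z (Fin.last n))) := by
      intro e0 z
      simp only [Fin.consEquiv_apply]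
      rw [Fin.prod_univ_succ]
      have h0 : ∀ k : Fin n,
          Q ((Fin.cons e0 z : Fin (n + 2) → E) (k.succ).castSucc)
              ((Fin.cons e0 z : Fin (n + 2) → E) (k.succ).succ)
            = Q (z k.castSucc) (z k.succ) := by
        intro k
        have h1 : (k.succ).castSucc = (k.castSucc).succ := Fin.castSucc_fin_succ n k
        rw [h1, Fin.cons_succ, Fin.cons_succ]
      have hlast : (Fin.cons e0 z : Fin (n + 2) → E) (Fin.last (n + 1)) = z (Fin.last n) := by
        rw [← Fin.succ_last, Fin.cons_succ]
      rw [Finset.prod_congr rfl (fun k _ => h0 k), hlast]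
      simp only [Fin.cons_zero, Fin.cons_succ, Fin.castSucc_zero]
      ring
    calc ∑ e0 : E, ∑ z : Fin (n + 1) → E,
          (fun w : Fin (n + 2) → E =>
            μ (w 0) * (∏ k : Fin (n + 1), Q (w k.castSucc) (w k.succ)) * g (w (Fin.last (n + 1))))
            ((Fin.consEquiv (fun _ : Fin (n + 2) => E)) (e0, z))
        = ∑ z : Fin (n + 1) → E, (∑ e0 : E, μ e0 * Q e0 (z 0)) *
            ((∏ k : Fin n, Q (z k.castSucc) (z k.succ)) * g (z (Fin.last n))) := by
          rw [Finset.sum_comm]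
          exact Finset.sum_congr rfl fun z _ => by
            rw [Finset.sum_mul]
            exact Finset.sum_congr rfl fun e0 _ => key e0 z
      _ = c * ∑ z : Fin (n + 1) → E,
            μ (z 0) * (∏ k : Fin n, Q (z k.castSucc) (z k.succ)) * g (z (Fin.last n)) := by
          rw [Finset.mul_sum]
          exact Finset.sum_congr rfl fun z _ => by rw [hH2]; ring
      _ = c ^ (n + 1) * ∑ e, μ e * g e := by rw [ih]; ring

/-- Exit law from the labyrinth: under (H1) and (H2), the chain started from
π̂_E = π(E)⁻¹π_E satisfies, for all i ∈ I and exit time n+1 (n ≥ 0),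
P(X_{τ_I} = i, τ_I = n+1) = π̂_I(i)·π(E)ⁿ·π(I); hence τ_I ∼ Geometric(π(I)),
X_{τ_I} ∼ π̂_I, and the two are independent. -/
theorem stmt12 {I E : Type*} [Fintype I] [Fintype E] [Nonempty I] [Nonempty E]
    (P : (I ⊕ E) → (I ⊕ E) → ℝ) (π : (I ⊕ E) → ℝ)
    (hPnn : ∀ a b, 0 ≤ P a b) (hProw : ∀ a, ∑ b, P a b = 1)
    (hπpos : ∀ a, 0 < π a) (hπsum : ∑ a, π a = 1)
    (hstat : ∀ b, ∑ a, π a * P a b = π b)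
    (hH1 : ∀ (e : E) (i : I), P (Sum.inr e) (Sum.inl i) = π (Sum.inl i))
    (hπI0 : 0 < ∑ i : I, π (Sum.inl i)) (hπI1 : ∑ i : I, π (Sum.inl i) < 1)
    (hH2 : ∀ e : E, ∑ d : E, π (Sum.inr d) * P (Sum.inr d) (Sum.inr e)
      = (∑ e' : E, π (Sum.inr e')) * π (Sum.inr e)) :
    ∀ (n : ℕ) (i : I),
      ∑ z : Fin (n + 1) → E,
        (π (Sum.inr (z 0)) / ∑ e' : E, π (Sum.inr e'))
          * (∏ k : Fin n, P (Sum.inr (z k.castSucc)) (Sum.inr (z k.succ)))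
          * P (Sum.inr (z (Fin.last n))) (Sum.inl i)
      = (π (Sum.inl i) / ∑ i' : I, π (Sum.inl i'))
          * (∑ e' : E, π (Sum.inr e')) ^ n * (∑ i' : I, π (Sum.inl i')) := by
  intro n i
  set cE : ℝ := ∑ e' : E, π (Sum.inr e') with hcE
  set cI : ℝ := ∑ i' : I, π (Sum.inl i') with hcI
  have hcEpos : 0 < cE := Finset.sum_pos (fun e _ => hπpos _) Finset.univ_nonempty
  have key := aux_path_sum (fun d e => P (Sum.inr d) (Sum.inr e))
    (fun e => π (Sum.inr e)) cE hH2 n (fun e => P (Sum.inr e) (Sum.inl i))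
  have : ∑ z : Fin (n + 1) → E,
      (π (Sum.inr (z 0)) / cE)
        * (∏ k : Fin n, P (Sum.inr (z k.castSucc)) (Sum.inr (z k.succ)))
        * P (Sum.inr (z (Fin.last n))) (Sum.inl i)
      = (1 / cE) * ∑ z : Fin (n + 1) → E,
          π (Sum.inr (z 0))
            * (∏ k : Fin n, P (Sum.inr (z k.castSucc)) (Sum.inr (z k.succ)))
            * P (Sum.inr (z (Fin.last n))) (Sum.inl i) := by
    rw [Finset.mul_sum]; exact Finset.sum_congr rfl fun z _ => by ring
  rw [this, key]
  have hsg : ∑ e : E, π (Sum.inr e) * P (Sum.inr e) (Sum.inl i) = cE * π (Sum.inl i) := by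
    rw [show (∑ e : E, π (Sum.inr e) * P (Sum.inr e) (Sum.inl i))
        = ∑ e : E, π (Sum.inr e) * π (Sum.inl i) from
      Finset.sum_congr rfl fun e _ => by rw [hH1], ← Finset.sum_mul]
  rw [hsg]
  field_simp
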